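/- Let Σ_Y = Y_1 + ... + Y_m and Σ_N = N_1 + ... + N_m where (Y_i, N_i) are i.i.d. pairs of nonnegative-integer-valued random variables. Define (Y', N') := (Σ_Y − 1, Σ_N) if Σ_Y ≥ 1 and (0, 0) if Σ_Y = 0. Then for all s > 0 (with 0^0 := 1) and t ≥ 0: E(s^{Y'} t^{N'}) = (1/s)·E(s^{Y_1} t^{N_1})^m − (1/s)·E(t^{N_1} 1_{Y_1 = 0})^m + P(Y_1 = 0)^m, whenever the expectations are finite. -/

import Mathlib

open scoped ENNReal

/-- Law of the componentwise sum of `n` i.i.d. copies of a pair-valued `PMF`. -/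
noncomputable def sumIID2 (p : PMF (ℕ × ℕ)) : ℕ → PMF (ℕ × ℕ)
  | 0 => PMF.pure (0, 0)
  | (k+1) => (sumIID2 p k).bind (fun s => p.map (fun a => (a.1 + s.1, a.2 + s.2)))

/-- One step of the joint recursion:
`(Y', N') = (Σ_Y − 1, Σ_N)` if `Σ_Y ≥ 1` and `(0, 0)` if `Σ_Y = 0`. -/
noncomputable def jointStep (m : ℕ) (p : PMF (ℕ × ℕ)) : PMF (ℕ × ℕ) :=
  (sumIID2 p m).map (fun z => if z.1 = 0 then (0, 0) else (z.1 - 1, z.2))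

lemma bind_tsum {α β : Type*} (q : PMF α) (f : α → PMF β) (h : β → ℝ≥0∞) :
    ∑' z, (q.bind f) z * h z = ∑' w, q w * ∑' z, f w z * h z := by
  simp only [PMF.bind_apply]
  calc ∑' z, (∑' w, q w * f w z) * h z
      = ∑' z, ∑' w, q w * f w z * h z := tsum_congr fun z => ENNReal.tsum_mul_right.symm
    _ = ∑' w, ∑' z, q w * f w z * h z := ENNReal.tsum_comm
    _ = ∑' w, q w * ∑' z, f w z * h z := by
        refine tsum_congr fun w => ?_
        rw [← ENNReal.tsum_mul_left]
        exact tsum_congr fun z => mul_assoc _ _ _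

lemma map_tsum {α β : Type*} (q : PMF α) (g : α → β) (h : β → ℝ≥0∞) :
    ∑' z, (q.map g) z * h z = ∑' w, q w * h (g w) := by
  classical
  simp only [PMF.map_apply]
  calc ∑' z, (∑' w, if z = g w then q w else 0) * h z
      = ∑' z, ∑' w, (if z = g w then q w else 0) * h z :=
        tsum_congr fun z => ENNReal.tsum_mul_right.symm
    _ = ∑' w, ∑' z, (if z = g w then q w else 0) * h z := ENNReal.tsum_comm
    _ = ∑' w, q w * h (g w) := by
        refine tsum_congr fun w => ?_
        rw [tsum_eq_single (g w) (by intro z hz; simp [if_neg hz])]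
        simp

lemma genfun_sumIID2 (p : PMF (ℕ × ℕ)) (a b : ℝ≥0∞) :
    ∀ k, ∑' z : ℕ × ℕ, (sumIID2 p k) z * (a ^ z.1 * b ^ z.2)
      = (∑' z : ℕ × ℕ, p z * (a ^ z.1 * b ^ z.2)) ^ k
  | 0 => by
      simp only [sumIID2]
      rw [tsum_eq_single ((0,0) : ℕ × ℕ)
        (by intro z hz; rw [PMF.pure_apply, if_neg hz, zero_mul])]
      simp [PMF.pure_apply]
  | (k+1) => by
      rw [show sumIID2 p (k+1)
          = (sumIID2 p k).bind (fun s => p.map (fun a => (a.1 + s.1, a.2 + s.2))) from rfl]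
      rw [bind_tsum]
      have inner : ∀ w : ℕ × ℕ, (∑' z : ℕ × ℕ,
          (p.map (fun a : ℕ × ℕ => (a.1 + w.1, a.2 + w.2))) z * (a ^ z.1 * b ^ z.2))
          = (a ^ w.1 * b ^ w.2) * ∑' z : ℕ × ℕ, p z * (a ^ z.1 * b ^ z.2) := by
        intro w
        rw [map_tsum, ← ENNReal.tsum_mul_left]
        refine tsum_congr fun u => ?_
        simp only [pow_add]
        ring
      calc ∑' w : ℕ × ℕ, (sumIID2 p k) w * ∑' z : ℕ × ℕ,
              (p.map (fun a : ℕ × ℕ => (a.1 + w.1, a.2 + w.2))) z * (a ^ z.1 * b ^ z.2)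
          = ∑' w : ℕ × ℕ, (sumIID2 p k) w * (a ^ w.1 * b ^ w.2)
              * ∑' z : ℕ × ℕ, p z * (a ^ z.1 * b ^ z.2) := by
            refine tsum_congr fun w => ?_
            rw [inner w]; ring
        _ = (∑' z : ℕ × ℕ, p z * (a ^ z.1 * b ^ z.2)) ^ (k+1) := by
            rw [ENNReal.tsum_mul_right, genfun_sumIID2 p a b k, pow_succ]

theorem stmt14 (m : ℕ) (hm : 2 ≤ m) (p : PMF (ℕ × ℕ)) (s t : ℝ)
    (hs : 0 < s) (ht : 0 ≤ t)
    (hsum : Summable fun z : ℕ × ℕ => (p z).toReal * s ^ z.1 * t ^ z.2) :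
    (∑' z : ℕ × ℕ, ((jointStep m p) z).toReal * s ^ z.1 * t ^ z.2)
      = (1 / s) * (∑' z : ℕ × ℕ, (p z).toReal * s ^ z.1 * t ^ z.2) ^ m
        - (1 / s) * (∑' z : ℕ × ℕ, if z.1 = 0 then (p z).toReal * t ^ z.2 else 0) ^ m
        + (∑' z : ℕ × ℕ, if z.1 = 0 then (p z).toReal else 0) ^ m := by
  classical
  set S : ℝ≥0∞ := ENNReal.ofReal s with hS
  set T : ℝ≥0∞ := ENNReal.ofReal t with hT
  have hSne : S ≠ 0 := by simp [hS, ENNReal.ofReal_eq_zero, not_le, hs]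
  have hSfin : S ≠ ⊤ := ENNReal.ofReal_ne_top
  have hTfin : T ≠ ⊤ := ENNReal.ofReal_ne_top
  set Q : PMF (ℕ × ℕ) := sumIID2 p m with hQ
  set Gp : ℝ≥0∞ := ∑' z : ℕ × ℕ, p z * (S ^ z.1 * T ^ z.2) with hGp
  set Ap : ℝ≥0∞ := ∑' z : ℕ × ℕ, p z * ((0:ℝ≥0∞) ^ z.1 * T ^ z.2) with hAp
  set Bp : ℝ≥0∞ := ∑' z : ℕ × ℕ, p z * ((0:ℝ≥0∞) ^ z.1 * (1:ℝ≥0∞) ^ z.2) with hBp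
  -- finiteness of Gp
  have hGp_eq : Gp = ENNReal.ofReal (∑' z : ℕ × ℕ, (p z).toReal * s ^ z.1 * t ^ z.2) := by
    rw [ENNReal.ofReal_tsum_of_nonneg (fun z => by positivity) hsum]
    refine tsum_congr fun z => ?_
    rw [ENNReal.ofReal_mul (by positivity), ENNReal.ofReal_mul (by positivity),
      ENNReal.ofReal_toReal (PMF.apply_ne_top p z),
      ENNReal.ofReal_pow hs.le, ENNReal.ofReal_pow ht, mul_assoc]
  have hGp_fin : Gp ≠ ⊤ := by rw [hGp_eq]; exact ENNReal.ofReal_ne_top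
  have hApGp : Ap ≤ Gp := by
    refine Summable.tsum_le_tsum (fun z => ?_) ENNReal.summable ENNReal.summable
    exact mul_le_mul_right (mul_le_mul' (pow_le_pow_left₀ le_rfl (zero_le (a := S)) _) le_rfl) _
  have hAp_fin : Ap ≠ ⊤ := ne_top_of_le_ne_top hGp_fin hApGp
  have hBp_fin : Bp ≠ ⊤ := by
    refine ne_top_of_le_ne_top (by simp : (1:ℝ≥0∞) ≠ ⊤) ?_
    calc Bp ≤ ∑' z : ℕ × ℕ, p z := by
          refine Summable.tsum_le_tsum (fun z => ?_) ENNReal.summable ENNReal.summable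
          calc p z * ((0:ℝ≥0∞) ^ z.1 * (1:ℝ≥0∞) ^ z.2) ≤ p z * (1 * 1) :=
              mul_le_mul_right (mul_le_mul' (pow_le_one' (zero_le_one) _)
                (by simp)) _
          _ = p z := by ring
      _ = 1 := p.tsum_coe
  -- generating functions of Q
  have hFQ : ∑' w : ℕ × ℕ, Q w * (S ^ w.1 * T ^ w.2) = Gp ^ m := genfun_sumIID2 p S T m
  have hAQ : ∑' w : ℕ × ℕ, (if w.1 = 0 then Q w * T ^ w.2 else 0) = Ap ^ m := by
    rw [← genfun_sumIID2 p 0 T m]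
    refine tsum_congr fun w => ?_
    by_cases h : w.1 = 0
    · simp [h, hQ]
    · simp [h, zero_pow h]
  have hBQ : ∑' w : ℕ × ℕ, (if w.1 = 0 then Q w else 0) = Bp ^ m := by
    rw [← genfun_sumIID2 p 0 1 m]
    refine tsum_congr fun w => ?_
    by_cases h : w.1 = 0
    · simp [h, hQ]
    · simp [h, zero_pow h]
  -- the LHS via map
  set g : ℕ × ℕ → ℕ × ℕ := fun z => if z.1 = 0 then (0, 0) else (z.1 - 1, z.2) with hg
  have hE : ∑' z : ℕ × ℕ, (jointStep m p) z * (S ^ z.1 * T ^ z.2)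
      = ∑' w : ℕ × ℕ, Q w * (S ^ (g w).1 * T ^ (g w).2) := by
    rw [jointStep, map_tsum]
  set M : ℝ≥0∞ := ∑' w : ℕ × ℕ, (if w.1 = 0 then 0 else Q w * (S ^ (w.1 - 1) * T ^ w.2))
    with hM
  have hsplit : ∑' w : ℕ × ℕ, Q w * (S ^ (g w).1 * T ^ (g w).2) = Bp ^ m + M := by
    rw [← hBQ, hM, ← ENNReal.tsum_add]
    refine tsum_congr fun w => ?_
    by_cases h : w.1 = 0 <;> simp [hg, h]
  -- S * M + Ap^m = Gp^m
  have hkey : S * M + Ap ^ m = Gp ^ m := by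
    rw [← hFQ, ← hAQ, hM, ← ENNReal.tsum_mul_left, ← ENNReal.tsum_add]
    refine tsum_congr fun w => ?_
    by_cases h : w.1 = 0
    · simp [h]
    · have h1 : w.1 - 1 + 1 = w.1 := Nat.succ_pred_eq_of_pos (Nat.pos_of_ne_zero h)
      simp only [if_neg h]
      rw [add_zero, ← mul_assoc, mul_comm S (Q w), mul_assoc, ← mul_assoc S,
        ← pow_succ', h1]
  -- finiteness of M
  have hSM_fin : S * M ≠ ⊤ := by
    have hle : S * M ≤ Gp ^ m := by rw [← hkey]; exact le_self_add
    exact ne_top_of_le_ne_top (ENNReal.pow_ne_top hGp_fin) hle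
  have hM_fin : M ≠ ⊤ := by
    intro h
    rw [h, ENNReal.mul_top hSne] at hSM_fin
    exact hSM_fin rfl
  -- convert everything to reals
  have toReal_term : ∀ (q : PMF (ℕ × ℕ)) (z : ℕ × ℕ),
      (q z * (S ^ z.1 * T ^ z.2)).toReal = (q z).toReal * s ^ z.1 * t ^ z.2 := by
    intro q z
    rw [ENNReal.toReal_mul, ENNReal.toReal_mul, ENNReal.toReal_pow, ENNReal.toReal_pow,
      hS, hT, ENNReal.toReal_ofReal hs.le, ENNReal.toReal_ofReal ht, mul_assoc]
  have hterm_ne : ∀ (q : PMF (ℕ × ℕ)) (z : ℕ × ℕ), q z * (S ^ z.1 * T ^ z.2) ≠ ⊤ :=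
    fun q z => ENNReal.mul_ne_top (PMF.apply_ne_top q z)
      (ENNReal.mul_ne_top (ENNReal.pow_ne_top hSfin) (ENNReal.pow_ne_top hTfin))
  have hLHS : (∑' z : ℕ × ℕ, ((jointStep m p) z).toReal * s ^ z.1 * t ^ z.2)
      = (∑' z : ℕ × ℕ, (jointStep m p) z * (S ^ z.1 * T ^ z.2)).toReal := by
    rw [ENNReal.tsum_toReal_eq (hterm_ne _)]
    exact tsum_congr fun z => (toReal_term _ z).symm
  have hGpR : (∑' z : ℕ × ℕ, (p z).toReal * s ^ z.1 * t ^ z.2) = Gp.toReal := by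
    rw [hGp, ENNReal.tsum_toReal_eq (hterm_ne _)]
    exact tsum_congr fun z => (toReal_term _ z).symm
  have hApR : (∑' z : ℕ × ℕ, if z.1 = 0 then (p z).toReal * t ^ z.2 else 0) = Ap.toReal := by
    rw [hAp, ENNReal.tsum_toReal_eq (fun z => ENNReal.mul_ne_top (PMF.apply_ne_top p z)
      (ENNReal.mul_ne_top (ENNReal.pow_ne_top (by simp)) (ENNReal.pow_ne_top hTfin)))]
    refine tsum_congr fun z => ?_
    by_cases h : z.1 = 0
    · simp [h, ENNReal.toReal_mul, ENNReal.toReal_pow, hT, ENNReal.toReal_ofReal ht]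
    · simp [h, zero_pow h]
  have hBpR : (∑' z : ℕ × ℕ, if z.1 = 0 then (p z).toReal else 0) = Bp.toReal := by
    rw [hBp, ENNReal.tsum_toReal_eq (fun z => ENNReal.mul_ne_top (PMF.apply_ne_top p z)
      (ENNReal.mul_ne_top (ENNReal.pow_ne_top (by simp)) (ENNReal.pow_ne_top (by simp))))]
    refine tsum_congr fun z => ?_
    by_cases h : z.1 = 0
    · simp [h]
    · simp [h, zero_pow h]
  rw [hLHS, hGpR, hApR, hBpR, hE, hsplit]
  have hBM : (Bp ^ m + M).toReal = (Bp.toReal) ^ m + M.toReal := by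
    rw [ENNReal.toReal_add (ENNReal.pow_ne_top hBp_fin) hM_fin, ENNReal.toReal_pow]
  rw [hBM]
  -- real version of hkey
  have hkeyR : s * M.toReal + Ap.toReal ^ m = Gp.toReal ^ m := by
    have := congrArg ENNReal.toReal hkey
    rw [ENNReal.toReal_add hSM_fin (ENNReal.pow_ne_top hAp_fin), ENNReal.toReal_mul,
      ENNReal.toReal_pow, ENNReal.toReal_pow, hS, ENNReal.toReal_ofReal hs.le] at this
    exact this
  have hs' : s ≠ 0 := ne_of_gt hs
  field_simp
  nlinarith [hkeyR]
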